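/- Assume λ is Borel measurable. Let μ and ν be finite Borel measures on ℝ^d such that for every m ∈ ℕ and every index function i : Fin m → Fin d, ∫ λ(x)^m (∏_{j : Fin m} x(i j))/m! dμ(x) = ∫ λ(x)^m (∏_{j : Fin m} x(i j))/m! dν(x). Then μ = ν. In other words, the normalized sequence of moments (E[λ(X)^m X^{⊗m}/m!])_{m ≥ 0} characterizes finite (signed) Borel measures on ℝ^d. (Proposition 4.1, item (3): the normalized moment map is characteristic to the finite signed Borel measures on ℝ^d; equality of two finite measures here is equivalent to the vanishing of a finite signed measure.) -/

import Mathlib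

open MeasureTheory

section Aux

lemma integrable_comp_cm {α : Type*} [MeasurableSpace α] {X : Type*} [TopologicalSpace X]
    [CompactSpace X] [MeasurableSpace X] [BorelSpace X]
    (F : α → X) (hF : Measurable F) (ρ : Measure α) [IsFiniteMeasure ρ]
    (g : C(X, ℝ)) : Integrable (fun x => g (F x)) ρ :=
  Integrable.mono' (integrable_const ‖g‖)
    ((g.continuous.measurable.comp hF).aestronglyMeasurable)
    (Filter.Eventually.of_forall fun x => g.norm_coe_le_norm _)

noncomputable def intCLM {α : Type*} [MeasurableSpace α] {X : Type*} [TopologicalSpace X]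
    [CompactSpace X] [MeasurableSpace X] [BorelSpace X]
    (F : α → X) (hF : Measurable F) (ρ : Measure α) [IsFiniteMeasure ρ] : C(X, ℝ) →L[ℝ] ℝ :=
  LinearMap.mkContinuous
    { toFun := fun g => ∫ x, g (F x) ∂ρ
      map_add' := fun g₁ g₂ => by
        simp only [ContinuousMap.add_apply]
        exact integral_add (integrable_comp_cm F hF ρ g₁) (integrable_comp_cm F hF ρ g₂)
      map_smul' := fun r g => by
        simp only [ContinuousMap.smul_apply, RingHom.id_apply]
        exact integral_smul r _ }
    (ρ Set.univ).toReal
    (fun g => by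
      refine le_trans (norm_integral_le_of_norm_le_const
        (Filter.Eventually.of_forall fun x => g.norm_coe_le_norm (F x))) ?_
      rw [mul_comm]; exact le_rfl)

lemma intCLM_apply {α : Type*} [MeasurableSpace α] {X : Type*} [TopologicalSpace X]
    [CompactSpace X] [MeasurableSpace X] [BorelSpace X]
    (F : α → X) (hF : Measurable F) (ρ : Measure α) [IsFiniteMeasure ρ]
    (g : C(X, ℝ)) : intCLM F hF ρ g = ∫ x, g (F x) ∂ρ := rfl

end Aux

/-- If a bounded measurable map `T` into `ℝ^d` has equal mixed moments under `μ` and `ν`,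
then the pushforwards agree. -/
theorem map_eq_of_moments (d : ℕ) (R : ℝ) (hR : 0 ≤ R)
    (T : EuclideanSpace ℝ (Fin d) → EuclideanSpace ℝ (Fin d))
    (hT : Measurable T) (hTb : ∀ x, ‖T x‖ ≤ R)
    (μ ν : Measure (EuclideanSpace ℝ (Fin d)))
    [IsFiniteMeasure μ] [IsFiniteMeasure ν]
    (h : ∀ (m : ℕ) (i : Fin m → Fin d),
      (∫ x, ∏ j, (T x) (i j) ∂μ) = ∫ x, ∏ j, (T x) (i j) ∂ν) :
    μ.map T = ν.map T := by
  set K : Set (EuclideanSpace ℝ (Fin d)) := Metric.closedBall 0 R with hK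
  haveI : CompactSpace K := isCompact_iff_compactSpace.mp (isCompact_closedBall 0 R)
  have hmem : ∀ x, T x ∈ K := by
    intro x
    simpa [hK, Metric.mem_closedBall, dist_zero_right] using hTb x
  set F : EuclideanSpace ℝ (Fin d) → K := fun x => ⟨T x, hmem x⟩ with hF
  have hFmeas : Measurable F := hT.subtype_mk
  -- coordinate functions
  set c : Fin d → C(K, ℝ) := fun k =>
    ⟨fun y => (y : EuclideanSpace ℝ (Fin d)) k, ((EuclideanSpace.proj k).continuous.comp continuous_subtype_val)⟩ with hc
  set A : Subalgebra ℝ C(K, ℝ) := Algebra.adjoin ℝ (Set.range c) with hA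
  have hsep : A.SeparatesPoints := by
    intro y y' hyy'
    have : ∃ k, (y : EuclideanSpace ℝ (Fin d)) k ≠ (y' : EuclideanSpace ℝ (Fin d)) k := by
      by_contra hcon
      push_neg at hcon
      exact hyy' (Subtype.ext (PiLp.ext hcon))
    obtain ⟨k, hk⟩ := this
    exact ⟨c k, ⟨c k, Algebra.subset_adjoin ⟨k, rfl⟩, rfl⟩, hk⟩
  have hdense : A.topologicalClosure = ⊤ :=
    ContinuousMap.subalgebra_topologicalClosure_eq_top_of_separatesPoints A hsep
  set Φ : C(K, ℝ) →L[ℝ] ℝ := intCLM F hFmeas μ with hΦ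
  set Ψ : C(K, ℝ) →L[ℝ] ℝ := intCLM F hFmeas ν with hΨ
  -- equality on monomials
  have hmono : ∀ g ∈ Submonoid.closure (Set.range c), Φ g = Ψ g := by
    intro g hg
    have : ∃ (m : ℕ) (i : Fin m → Fin d), g = ∏ j : Fin m, c (i j) := by
      induction hg using Submonoid.closure_induction with
      | mem x hx =>
        obtain ⟨k, rfl⟩ := hx
        exact ⟨1, fun _ => k, by simp⟩
      | one => exact ⟨0, Fin.elim0, by simp⟩
      | mul x y hx hy ihx ihy =>
        obtain ⟨m, i, rfl⟩ := ihx
        obtain ⟨m', i', rfl⟩ := ihy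
        refine ⟨m + m', Fin.append i i', ?_⟩
        rw [Fin.prod_univ_add]
        simp [Fin.append_left, Fin.append_right]
    obtain ⟨m, i, rfl⟩ := this
    have key : ∀ x : EuclideanSpace ℝ (Fin d), (∏ j : Fin m, c (i j)) (F x) = ∏ j, (T x) (i j) := by
      intro x
      simp [hc, hF, ContinuousMap.prod_apply]; rfl
    rw [hΦ, hΨ, intCLM_apply, intCLM_apply]
    simp only [key]
    exact h m i
  have hAeq : ∀ g ∈ A, Φ g = Ψ g := by
    intro g hg
    have hspan : g ∈ Submodule.span ℝ (Submonoid.closure (Set.range c) : Set C(K, ℝ)) := by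
      rw [← Algebra.adjoin_eq_span]
      exact hg
    have : Submodule.span ℝ (Submonoid.closure (Set.range c) : Set C(K, ℝ)) ≤
        LinearMap.eqLocus Φ.toLinearMap Ψ.toLinearMap := by
      rw [Submodule.span_le]
      intro y hy
      exact hmono y hy
    exact this hspan
  have hall : ∀ g : C(K, ℝ), Φ g = Ψ g := by
    intro g
    have hcl : (A : Set C(K, ℝ)) ⊆ {g | Φ g = Ψ g} := hAeq
    have hclosed : IsClosed {g : C(K, ℝ) | Φ g = Ψ g} :=
      isClosed_eq Φ.continuous Ψ.continuous
    have : closure (A : Set C(K, ℝ)) ⊆ {g | Φ g = Ψ g} := closure_minimal hcl hclosed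
    apply this
    rw [← Subalgebra.topologicalClosure_coe, hdense]
    trivial
  -- conclude
  haveI : IsFiniteMeasure (μ.map T) :=
    ⟨by rw [Measure.map_apply hT MeasurableSet.univ]; exact measure_lt_top _ _⟩
  apply ext_of_forall_lintegral_eq_of_IsFiniteMeasure
  intro f
  have hfm : Measurable fun y : EuclideanSpace ℝ (Fin d) => (f y : ENNReal) :=
    measurable_coe_nnreal_ennreal.comp f.continuous.measurable
  rw [lintegral_map hfm hT, lintegral_map hfm hT]
  have hint : ∀ (ρ : Measure (EuclideanSpace ℝ (Fin d))), Integrable (fun x => ((f (T x) : ℝ))) ρ → True := fun _ _ => trivial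
  set g : C(K, ℝ) := ⟨fun y => (f (y : EuclideanSpace ℝ (Fin d)) : ℝ),
    NNReal.continuous_coe.comp (f.continuous.comp continuous_subtype_val)⟩ with hg
  have hgf : ∀ x : EuclideanSpace ℝ (Fin d), ((f (T x) : ℝ)) = g (F x) := fun x => rfl
  have hintμ : Integrable (fun x => ((f (T x) : ℝ))) μ := by
    simp only [hgf]; exact integrable_comp_cm F hFmeas μ g
  have hintν : Integrable (fun x => ((f (T x) : ℝ))) ν := by
    simp only [hgf]; exact integrable_comp_cm F hFmeas ν g
  rw [lintegral_coe_eq_integral _ hintμ, lintegral_coe_eq_integral _ hintν]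
  congr 1
  have := hall g
  rw [hΦ, hΨ, intCLM_apply, intCLM_apply] at this
  simpa only [hgf] using this

theorem stmt_8 (d : ℕ) (hd : 1 ≤ d)
    (ψ : ℝ → ℝ) (hψ1 : ψ 1 = 1) (hψge : ∀ x, 1 ≤ x → 1 ≤ ψ x)
    (hψle : ∀ x, 1 ≤ x → ψ x ≤ x ^ 2) (hψinj : Set.InjOn ψ (Set.Ici 1))
    (C : ℝ) (hψC : ∀ x, 1 ≤ x → ψ x ≤ C)
    (lam : EuclideanSpace ℝ (Fin d) → ℝ) (hlam0 : ∀ x, 0 < lam x)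
    (hlammeas : Measurable lam)
    (hlam : ∀ x : EuclideanSpace ℝ (Fin d),
      HasSum (fun m => (lam x * ‖x‖) ^ (2 * m) / (m.factorial : ℝ) ^ 2)
        (ψ (Real.sqrt (∑' m, ‖x‖ ^ (2 * m) / (m.factorial : ℝ) ^ 2))))
    (μ ν : Measure (EuclideanSpace ℝ (Fin d)))
    [IsFiniteMeasure μ] [IsFiniteMeasure ν]
    (h : ∀ (m : ℕ) (i : Fin m → Fin d),
      (∫ x, lam x ^ m * (∏ j, x (i j)) / (m.factorial : ℝ) ∂μ) =
        ∫ x, lam x ^ m * (∏ j, x (i j)) / (m.factorial : ℝ) ∂ν) :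
    μ = ν := by
  classical
  set T : EuclideanSpace ℝ (Fin d) → EuclideanSpace ℝ (Fin d) := fun x => lam x • x with hTdef
  have hT : Measurable T := hlammeas.smul measurable_id
  have hnormT : ∀ x, ‖T x‖ = lam x * ‖x‖ := by
    intro x
    rw [hTdef]
    simp only [norm_smul, Real.norm_eq_abs, abs_of_pos (hlam0 x)]
  -- summability facts
  have hsummS : ∀ t : ℝ, Summable (fun m => t ^ (2 * m) / (m.factorial : ℝ) ^ 2) := by
    intro t
    refine Summable.of_nonneg_of_le (fun m => ?_) (fun m => ?_)
      (Real.summable_pow_div_factorial (t ^ 2))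
    · rw [pow_mul]; positivity
    · rw [pow_mul]
      apply div_le_div_of_nonneg_left (by positivity) (by positivity)
      calc (m.factorial : ℝ) = m.factorial * 1 := by ring
      _ ≤ (m.factorial : ℝ) * m.factorial := by
          apply mul_le_mul_of_nonneg_left _ (by positivity)
          exact_mod_cast m.factorial_pos
      _ = (m.factorial : ℝ) ^ 2 := by ring
  have hS1 : ∀ t : ℝ, 1 ≤ ∑' m, t ^ (2 * m) / (m.factorial : ℝ) ^ 2 := by
    intro t
    have := Summable.le_tsum (hsummS t) 0 (fun j _ => by rw [pow_mul]; positivity)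
    simpa using this
  have hSnn : ∀ t : ℝ, 0 ≤ ∑' m, t ^ (2 * m) / (m.factorial : ℝ) ^ 2 :=
    fun t => le_trans zero_le_one (hS1 t)
  have hpsiarg : ∀ x : EuclideanSpace ℝ (Fin d),
      1 ≤ Real.sqrt (∑' m, ‖x‖ ^ (2 * m) / (m.factorial : ℝ) ^ 2) := by
    intro x
    rw [show (1 : ℝ) = Real.sqrt 1 by simp]
    exact Real.sqrt_le_sqrt (hS1 ‖x‖)
  -- bound on T
  set R := Real.sqrt C with hRdef
  have hR : 0 ≤ R := Real.sqrt_nonneg C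
  have hTb : ∀ x, ‖T x‖ ≤ R := by
    intro x
    have hsum := hlam x
    have hterm : (lam x * ‖x‖) ^ (2 * 1) / ((1 : ℕ).factorial : ℝ) ^ 2 ≤
        ψ (Real.sqrt (∑' m, ‖x‖ ^ (2 * m) / (m.factorial : ℝ) ^ 2)) :=
      le_hasSum hsum 1 (fun j _ => by rw [pow_mul]; positivity)
    have hc : ψ (Real.sqrt (∑' m, ‖x‖ ^ (2 * m) / (m.factorial : ℝ) ^ 2)) ≤ C :=
      hψC _ (hpsiarg x)
    have h2 : (lam x * ‖x‖) ^ 2 ≤ C := by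
      have : (lam x * ‖x‖) ^ (2 * 1) / ((1 : ℕ).factorial : ℝ) ^ 2 = (lam x * ‖x‖) ^ 2 := by
        norm_num
      rw [this] at hterm
      linarith
    rw [hnormT x, hRdef]
    exact Real.le_sqrt_of_sq_le h2
  -- strict monotonicity of S
  have hSmono : ∀ a b : ℝ, 0 ≤ a → a < b →
      (∑' m, a ^ (2 * m) / (m.factorial : ℝ) ^ 2) <
        ∑' m, b ^ (2 * m) / (m.factorial : ℝ) ^ 2 := by
    intro a b ha hab
    refine Summable.tsum_lt_tsum (i := 1) (fun m => ?_) ?_ (hsummS a) (hsummS b)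
    · rw [pow_mul, pow_mul]
      have h2 : a ^ 2 ≤ b ^ 2 := by nlinarith
      gcongr
    · have hb2 : a ^ 2 < b ^ 2 := by nlinarith
      have : ((Nat.factorial 1 : ℝ)) ^ 2 = 1 := by norm_num [Nat.factorial]
      rw [this]
      simpa [pow_mul] using hb2
  -- injectivity of T
  have hTinj : Function.Injective T := by
    intro x x' hxx'
    have hr : lam x * ‖x‖ = lam x' * ‖x'‖ := by
      rw [← hnormT, ← hnormT, hxx']
    have h1 := hlam x
    have h2 := hlam x'
    rw [hr] at h1
    have hpsieq := h1.unique h2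
    have hSeq : (∑' m, ‖x‖ ^ (2 * m) / (m.factorial : ℝ) ^ 2) =
        ∑' m, ‖x'‖ ^ (2 * m) / (m.factorial : ℝ) ^ 2 := by
      have := hψinj (hpsiarg x) (hpsiarg x') hpsieq
      exact (Real.sqrt_inj (hSnn _) (hSnn _)).mp this
    have hnorm : ‖x‖ = ‖x'‖ := by
      rcases lt_trichotomy ‖x‖ ‖x'‖ with hlt | heq | hgt
      · exact absurd hSeq (ne_of_lt (hSmono _ _ (norm_nonneg x) hlt))
      · exact heq
      · exact absurd hSeq.symm (ne_of_lt (hSmono _ _ (norm_nonneg x') hgt))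
    rcases eq_or_ne ‖x‖ 0 with h0 | h0
    · have hx : x = 0 := norm_eq_zero.mp h0
      have hx' : x' = 0 := norm_eq_zero.mp (hnorm ▸ h0)
      rw [hx, hx']
    · have hlameq : lam x = lam x' := by
        rw [← hnorm] at hr
        exact mul_right_cancel₀ h0 hr
      have : lam x • x = lam x • x' := by
        rw [hTdef] at hxx'
        simpa [hlameq] using hxx'
      exact smul_right_injective _ (ne_of_gt (hlam0 x)) this
  -- moments
  have hmom : ∀ (m : ℕ) (i : Fin m → Fin d),
      (∫ x, ∏ j, (T x) (i j) ∂μ) = ∫ x, ∏ j, (T x) (i j) ∂ν := by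
    intro m i
    have hprod : ∀ x : EuclideanSpace ℝ (Fin d),
        (∏ j, (T x) (i j)) = lam x ^ m * ∏ j, x (i j) := by
      intro x
      rw [hTdef]
      simp only [PiLp.smul_apply, smul_eq_mul]
      rw [Finset.prod_mul_distrib, Finset.prod_const, Finset.card_univ, Fintype.card_fin]
    simp only [hprod]
    have hfac : ((m.factorial : ℝ)) ≠ 0 := by exact_mod_cast m.factorial_ne_zero
    have := h m i
    rw [integral_div, integral_div] at this
    exact div_left_inj' hfac |>.mp this
  have hmap := map_eq_of_moments d R hR T hT hTb μ ν hmom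
  have hemb : MeasurableEmbedding T := hT.measurableEmbedding hTinj
  apply Measure.ext
  intro s hs
  have hims : MeasurableSet (T '' s) := hemb.measurableSet_image.2 hs
  have h1 : μ s = (μ.map T) (T '' s) := by
    rw [Measure.map_apply hT hims, Set.preimage_image_eq s hTinj]
  have h2 : ν s = (ν.map T) (T '' s) := by
    rw [Measure.map_apply hT hims, Set.preimage_image_eq s hTinj]
  rw [h1, h2, hmap]
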